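/- In the generalized Lax–Milgram setting, let b(u,v) := conj(a(v,u)) be the conjugate sesquilinear form, which satisfies the same hypotheses with Φ₁ and Φ₂ exchanged, and let S₁ be the operator associated with b. Then S* = S₁ and S₁* = S. -/

import Mathlib

open scoped ComplexConjugate

section Aux

variable {V H : Type*}
    [NormedAddCommGroup V] [InnerProductSpace ℂ V] [CompleteSpace V]
    [NormedAddCommGroup H] [InnerProductSpace ℂ H] [CompleteSpace H]

/-- The conjugate sesquilinear form `b u v = conj (a v u)`. -/
noncomputable def bform (a : V →ₛₗ[starRingEnd ℂ] V →ₗ[ℂ] ℂ) :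
    V →ₛₗ[starRingEnd ℂ] V →ₗ[ℂ] ℂ :=
  LinearMap.mk₂'ₛₗ (starRingEnd ℂ) (RingHom.id ℂ) (fun u v => conj (a v u))
    (fun u₁ u₂ v => by simp)
    (fun c u v => by simp [mul_comm])
    (fun u v₁ v₂ => by simp)
    (fun c u v => by simp)

@[simp] lemma bform_apply (a : V →ₛₗ[starRingEnd ℂ] V →ₗ[ℂ] ℂ) (u v : V) :
    bform a u v = conj (a v u) := rfl

/-- Riesz representation of a bounded sesquilinear form as a continuous operator. -/
lemma exists_rep (a : V →ₛₗ[starRingEnd ℂ] V →ₗ[ℂ] ℂ)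
    (habound : ∃ M : ℝ, ∀ u v : V, ‖a u v‖ ≤ M * ‖u‖ * ‖v‖) :
    ∃ T : V →L[ℂ] V, ∀ u v : V, (inner ℂ (T u) v : ℂ) = a u v := by
  obtain ⟨M, hM⟩ := habound
  have hM' : ∀ u v : V, ‖a u v‖ ≤ max M 0 * ‖u‖ * ‖v‖ := fun u v => by
    refine (hM u v).trans ?_
    exact mul_le_mul_of_nonneg_right
      (mul_le_mul_of_nonneg_right (le_max_left M 0) (norm_nonneg u)) (norm_nonneg v)
  set f : V → V := fun u => (InnerProductSpace.toDual ℂ V).symm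
      (LinearMap.mkContinuous (a u) (max M 0 * ‖u‖)
        (fun v => hM' u v)) with hfdef
  have hf : ∀ u v : V, (inner ℂ (f u) v : ℂ) = a u v := fun u v => by
    rw [hfdef]; exact InnerProductSpace.toDual_symm_apply
  have fadd : ∀ u w : V, f (u + w) = f u + f w := fun u w =>
    ext_inner_right ℂ fun v => by
      rw [hf, inner_add_left, hf, hf, map_add, LinearMap.add_apply]
  have fsmul : ∀ (c : ℂ) (u : V), f (c • u) = c • f u := fun c u =>
    ext_inner_right ℂ fun v => by
      rw [hf, inner_smul_left, hf, map_smulₛₗ, LinearMap.smul_apply, smul_eq_mul]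
  let Tl : V →ₗ[ℂ] V := { toFun := f, map_add' := fadd, map_smul' := fsmul }
  have hbound : ∀ u : V, ‖Tl u‖ ≤ max M 0 * ‖u‖ := fun u => by
    show ‖f u‖ ≤ _
    rw [hfdef]
    simp only [LinearIsometryEquiv.norm_map]
    exact LinearMap.mkContinuous_norm_le _ (by positivity) _
  exact ⟨Tl.mkContinuous (max M 0) hbound, hf⟩

/-- An operator bounded below with trivially-orthogonal range is surjective. -/
lemma surj_of (T : V →L[ℂ] V) (c : ℝ) (hc : 0 < c) (hlow : ∀ u : V, c * ‖u‖ ≤ ‖T u‖)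
    (hd : ∀ w : V, (∀ u : V, (inner ℂ (T u) w : ℂ) = 0) → w = 0) :
    Function.Surjective T := by
  have hanti : AntilipschitzWith ⟨c⁻¹, by positivity⟩ T := by
    refine T.antilipschitz_of_bound fun u => ?_
    show ‖u‖ ≤ c⁻¹ * ‖T u‖
    rw [← div_eq_inv_mul, le_div_iff₀ hc, mul_comm]
    exact hlow u
  have hclosed : IsClosed (Set.range T) := hanti.isClosed_range T.uniformContinuous
  have horth : (LinearMap.range (T : V →ₗ[ℂ] V))ᗮ = ⊥ := by
    rw [Submodule.eq_bot_iff]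
    intro w hw
    exact hd w fun u => hw (T u) (LinearMap.mem_range_self _ u)
  have hdense : Dense (Set.range T) := by
    have h1 : (LinearMap.range (T : V →ₗ[ℂ] V)).topologicalClosure = ⊤ :=
      Submodule.topologicalClosure_eq_top_iff.mpr horth
    have h2 : Dense ((LinearMap.range (T : V →ₗ[ℂ] V) : Submodule ℂ V) : Set V) := by
      rw [dense_iff_closure_eq, ← Submodule.topologicalClosure_coe, h1, Submodule.top_coe]
    simpa [LinearMap.coe_range] using h2
  have : Set.range T = Set.univ := by
    rw [← hclosed.closure_eq, hdense.closure_eq]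
  exact Set.range_eq_univ.mp this

/-- Main auxiliary lemma: `S.adjoint = S₁`, in the symmetric setting. -/
lemma key (e : V →L[ℂ] H) (he_inj : Function.Injective e) (he_dense : DenseRange e)
    (a : V →ₛₗ[starRingEnd ℂ] V →ₗ[ℂ] ℂ)
    (habound : ∃ M : ℝ, ∀ u v : V, ‖a u v‖ ≤ M * ‖u‖ * ‖v‖)
    (Φ₁ Φ₂ : V →L[ℂ] V)
    (α : ℝ) (hα : 0 < α)
    (hcoer1 : ∀ u : V, α * ‖u‖ ^ 2 ≤ ‖a u u‖ + ‖a u (Φ₁ u)‖)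
    (hcoer2 : ∀ u : V, α * ‖u‖ ^ 2 ≤ ‖a u u‖ + ‖a (Φ₂ u) u‖)
    (S : H →ₗ.[ℂ] H)
    (hSdom : ∀ x : H, x ∈ S.domain ↔
      ∃ u : V, e u = x ∧ ∃ C : ℝ, ∀ v : V, ‖a u v‖ ≤ C * ‖e v‖)
    (hSval : ∀ (u : V) (hx : e u ∈ S.domain), ∀ v : V,
      a u v = (inner ℂ (S ⟨e u, hx⟩) (e v) : ℂ))
    (S₁ : H →ₗ.[ℂ] H)
    (hS₁dom : ∀ x : H, x ∈ S₁.domain ↔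
      ∃ u : V, e u = x ∧ ∃ C : ℝ, ∀ v : V, ‖(starRingEnd ℂ) (a v u)‖ ≤ C * ‖e v‖)
    (hS₁val : ∀ (u : V) (hx : e u ∈ S₁.domain), ∀ v : V,
      (starRingEnd ℂ) (a v u) = (inner ℂ (S₁ ⟨e u, hx⟩) (e v) : ℂ)) :
    S.adjoint = S₁ := by
  classical
  -- the operators representing a and its conjugate form
  obtain ⟨T, hT⟩ := exists_rep a habound
  obtain ⟨T₁, hT₁'⟩ := exists_rep (bform a)
    (by obtain ⟨M, hM⟩ := habound
        exact ⟨M, fun u v => by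
          simp only [bform_apply, RingHom.coe_comp, Function.comp_apply]
          rw [RCLike.norm_conj]
          calc ‖a v u‖ ≤ M * ‖v‖ * ‖u‖ := hM v u
          _ = M * ‖u‖ * ‖v‖ := by ring⟩)
  have hT₁ : ∀ u v : V, (inner ℂ (T₁ u) v : ℂ) = conj (a v u) := fun u v => by
    rw [hT₁' u v]; rfl
  -- lower bounds
  have hden : (0:ℝ) < 1 + ‖Φ₁‖ := by positivity
  have hden₂ : (0:ℝ) < 1 + ‖Φ₂‖ := by positivity
  have hlowT : ∀ u : V, (α / (1 + ‖Φ₁‖)) * ‖u‖ ≤ ‖T u‖ := by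
    intro u
    rcases eq_or_ne u 0 with rfl | hu
    · simp
    have hu' : (0:ℝ) < ‖u‖ := norm_pos_iff.mpr hu
    have h1 := hcoer1 u
    have e1 : ‖a u u‖ ≤ ‖T u‖ * ‖u‖ := by rw [← hT]; exact norm_inner_le_norm _ _
    have e2 : ‖a u (Φ₁ u)‖ ≤ ‖T u‖ * ‖Φ₁ u‖ := by rw [← hT]; exact norm_inner_le_norm _ _
    have e3 : ‖Φ₁ u‖ ≤ ‖Φ₁‖ * ‖u‖ := Φ₁.le_opNorm u
    rw [div_mul_eq_mul_div, div_le_iff₀ hden]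
    nlinarith [norm_nonneg (T u)]
  have hlowT₁ : ∀ u : V, (α / (1 + ‖Φ₂‖)) * ‖u‖ ≤ ‖T₁ u‖ := by
    intro u
    rcases eq_or_ne u 0 with rfl | hu
    · simp
    have hu' : (0:ℝ) < ‖u‖ := norm_pos_iff.mpr hu
    have h1 := hcoer2 u
    have e1 : ‖a u u‖ ≤ ‖T₁ u‖ * ‖u‖ := by
      rw [← RCLike.norm_conj, ← hT₁]; exact norm_inner_le_norm _ _
    have e2 : ‖a (Φ₂ u) u‖ ≤ ‖T₁ u‖ * ‖Φ₂ u‖ := by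
      rw [← RCLike.norm_conj, ← hT₁]; exact norm_inner_le_norm _ _
    have e3 : ‖Φ₂ u‖ ≤ ‖Φ₂‖ * ‖u‖ := Φ₂.le_opNorm u
    rw [div_mul_eq_mul_div, div_le_iff₀ hden₂]
    nlinarith [norm_nonneg (T₁ u)]
  -- trivial kernels of the "adjoint pairing"
  have hzero : ∀ w : V, (∀ u : V, a u w = 0) → w = 0 := by
    intro w hw
    have h2 := hcoer2 w
    rw [hw w, hw (Φ₂ w)] at h2
    simp only [norm_zero, add_zero] at h2
    have : ‖w‖ ^ 2 = 0 := le_antisymm (by nlinarith) (by positivity)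
    have := pow_eq_zero_iff (n := 2) (by norm_num) |>.mp this
    exact norm_eq_zero.mp this
  have hzero₁ : ∀ w : V, (∀ u : V, a w u = 0) → w = 0 := by
    intro w hw
    have h1 := hcoer1 w
    rw [hw w, hw (Φ₁ w)] at h1
    simp only [norm_zero, add_zero] at h1
    have : ‖w‖ ^ 2 = 0 := le_antisymm (by nlinarith) (by positivity)
    have := pow_eq_zero_iff (n := 2) (by norm_num) |>.mp this
    exact norm_eq_zero.mp this
  -- surjectivity of T and T₁
  have hcpos : (0:ℝ) < α / (1 + ‖Φ₁‖) := by positivity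
  have hcpos₂ : (0:ℝ) < α / (1 + ‖Φ₂‖) := by positivity
  have Tsurj : Function.Surjective T :=
    surj_of T _ hcpos hlowT (fun w hw => hzero w fun u => by rw [← hT]; exact hw u)
  have T₁surj : Function.Surjective T₁ :=
    surj_of T₁ _ hcpos₂ hlowT₁ (fun w hw => by
      refine hzero₁ w fun u => ?_
      have := hw u
      rw [hT₁] at this
      simpa using congrArg conj this)
  -- the Hilbert adjoint of e
  set ed : H →L[ℂ] V := ContinuousLinearMap.adjoint e with hed_def
  have hed : ∀ (f : H) (v : V), (inner ℂ (ed f) v : ℂ) = inner ℂ f (e v) := fun f v =>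
    ContinuousLinearMap.adjoint_inner_left e v f
  -- density of range e as a submodule
  have hre : Dense ((LinearMap.range (e : V →ₗ[ℂ] H) : Submodule ℂ H) : Set H) := by
    rw [LinearMap.coe_range]; exact he_dense
  -- density of range ed
  have edDense : Dense (Set.range ed) := by
    have horth : (LinearMap.range (ed : H →ₗ[ℂ] V))ᗮ = ⊥ := by
      rw [Submodule.eq_bot_iff]
      intro w hw
      have h0 : ∀ f : H, (inner ℂ f (e w) : ℂ) = 0 := fun f => by
        rw [← hed]; exact hw (ed f) (LinearMap.mem_range_self _ f)
      have hew : e w = 0 := by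
        have := h0 (e w); rwa [inner_self_eq_zero] at this
      exact he_inj (by rw [hew, map_zero])
    have h1 : (LinearMap.range (ed : H →ₗ[ℂ] V)).topologicalClosure = ⊤ :=
      Submodule.topologicalClosure_eq_top_iff.mpr horth
    have h2 : Dense ((LinearMap.range (ed : H →ₗ[ℂ] V) : Submodule ℂ V) : Set V) := by
      rw [dense_iff_closure_eq, ← Submodule.topologicalClosure_coe, h1, Submodule.top_coe]
    simpa [LinearMap.coe_range] using h2
  -- surjectivity of S (with explicit solution) and density of its domain
  have Ssurj : ∀ f : H, ∃ u : V, ∀ v : V, a u v = inner ℂ f (e v) := by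
    intro f
    obtain ⟨u, hu⟩ := Tsurj (ed f)
    exact ⟨u, fun v => by rw [← hT, hu, hed]⟩
  have S₁surj : ∀ f : H, ∃ w : V, ∀ v : V, conj (a v w) = (inner ℂ f (e v) : ℂ) := by
    intro f
    obtain ⟨w, hw⟩ := T₁surj (ed f)
    exact ⟨w, fun v => by rw [← hT₁, hw, hed]⟩
  have eq_of_e : ∀ x y : H, (∀ v : V, (inner ℂ x (e v) : ℂ) = inner ℂ y (e v)) → x = y := by
    intro x y h
    refine hre.eq_of_inner_left ℂ fun q hq => ?_
    obtain ⟨v, hv⟩ := hq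
    rw [← hv]
    exact h v
  -- S is surjective at the LinearPMap level
  have SsurjP : ∀ f : H, ∃ q : S.domain, S q = f := by
    intro f
    obtain ⟨u, hu⟩ := Ssurj f
    have hmem : e u ∈ S.domain := (hSdom _).mpr ⟨u, rfl, ‖f‖, fun v => by
      rw [hu]; exact norm_inner_le_norm _ _⟩
    refine ⟨⟨e u, hmem⟩, ?_⟩
    refine eq_of_e _ _ fun v => ?_
    rw [← hSval u hmem v, hu]
  have S₁surjP : ∀ f : H, ∃ w : V, ∃ hw : e w ∈ S₁.domain, S₁ ⟨e w, hw⟩ = f := by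
    intro f
    obtain ⟨w, hw⟩ := S₁surj f
    have hmem : e w ∈ S₁.domain := (hS₁dom _).mpr ⟨w, rfl, ‖f‖, fun v => by
      have : ((starRingEnd ℂ) (a v w)) = inner ℂ f (e v) := hw v
      rw [this]; exact norm_inner_le_norm _ _⟩
    refine ⟨w, hmem, eq_of_e _ _ fun v => ?_⟩
    rw [← hS₁val w hmem v]
    exact hw v
  -- density of the domain of S
  have hSdense : Dense (S.domain : Set H) := by
    have hsub : e '' (T ⁻¹' Set.range ed) ⊆ (S.domain : Set H) := by
      rintro x ⟨u, ⟨f, hf⟩, rfl⟩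
      refine (hSdom _).mpr ⟨u, rfl, ‖f‖, fun v => ?_⟩
      have : a u v = inner ℂ f (e v) := by rw [← hT, ← hf, hed]
      rw [this]
      exact norm_inner_le_norm _ _
    have hpre : Dense (T ⁻¹' Set.range ed) := by
      rw [Metric.dense_iff]
      intro x r hr
      have hx : T x ∈ closure (Set.range ed) := edDense (T x)
      obtain ⟨g, hg, hgr⟩ := Metric.mem_closure_iff.mp hx ((α / (1 + ‖Φ₁‖)) * r)
        (by positivity)
      obtain ⟨u, hu⟩ := Tsurj g
      refine ⟨u, Metric.mem_ball.mpr ?_, by rw [Set.mem_preimage, hu]; exact hg⟩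
      have hlow := hlowT (u - x)
      have : ‖T u - T x‖ = dist (T x) g := by
        rw [dist_comm, dist_eq_norm, hu]
      rw [map_sub] at hlow
      rw [this] at hlow
      have h2 : (α / (1 + ‖Φ₁‖)) * ‖u - x‖ < (α / (1 + ‖Φ₁‖)) * r := lt_of_le_of_lt hlow hgr
      have h3 : ‖u - x‖ < r := lt_of_mul_lt_mul_left h2 (le_of_lt hcpos)
      rwa [dist_eq_norm]
    exact (he_dense.dense_image e.continuous hpre).mono hsub
  -- formal adjointness : S.IsFormalAdjoint S₁
  have hformal : S.IsFormalAdjoint S₁ := by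
    intro p q
    obtain ⟨u, hu, -⟩ := (hSdom p).mp p.2
    obtain ⟨w, hw, -⟩ := (hS₁dom q).mp q.2
    have hup : p = ⟨e u, hu ▸ p.2⟩ := Subtype.ext hu.symm
    have hwq : q = ⟨e w, hw ▸ q.2⟩ := Subtype.ext hw.symm
    rw [hup, hwq]
    have h1 : a u w = (inner ℂ (S ⟨e u, hu ▸ p.2⟩) (e w) : ℂ) := hSval u _ w
    have h2 : conj (a u w) = (inner ℂ (S₁ ⟨e w, hw ▸ q.2⟩) (e u) : ℂ) := hS₁val w _ u
    show (inner ℂ (S ⟨e u, hu ▸ p.2⟩) (e w) : ℂ) = inner ℂ (e u) (S₁ ⟨e w, hw ▸ q.2⟩)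
    rw [← h1, ← inner_conj_symm, ← h2]
    simp
  -- S₁ ≤ S.adjoint
  have hle₁ : S₁ ≤ S.adjoint := LinearPMap.IsFormalAdjoint.le_adjoint hSdense hformal
  -- S.adjoint ≤ S₁
  have hFA := LinearPMap.adjoint_isFormalAdjoint hSdense
  have hle₂ : S.adjoint ≤ S₁ := by
    have hdom : ∀ x : H, ∀ hx : x ∈ S.adjoint.domain,
        ∃ w : V, ∃ hw : e w ∈ S₁.domain, x = e w ∧
          S.adjoint ⟨x, hx⟩ = S₁ ⟨e w, hw⟩ := by
      intro x hx
      set z := S.adjoint ⟨x, hx⟩ with hz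
      obtain ⟨w, hw, hwz⟩ := S₁surjP z
      have hxew : x = e w := by
        refine ext_inner_left ℂ fun f => ?_
        obtain ⟨q, hq⟩ := SsurjP f
        obtain ⟨u, hu, -⟩ := (hSdom q).mp q.2
        have hq' : q = ⟨e u, hu ▸ q.2⟩ := Subtype.ext hu.symm
        have h1 : (inner ℂ (S q) x : ℂ) = inner ℂ ((q : H)) z := by
          have h0 := hFA ⟨x, hx⟩ q
          calc (inner ℂ (S q) x : ℂ) = conj (inner ℂ x (S q)) := (inner_conj_symm _ _).symm
            _ = conj (inner ℂ z ((q : H))) := congrArg conj h0.symm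
            _ = inner ℂ ((q : H)) z := inner_conj_symm _ _
        have h2 : (inner ℂ (S q) (e w) : ℂ) = inner ℂ ((q : H)) z := by
          rw [hq']
          have h3 : a u w = (inner ℂ (S ⟨e u, hu ▸ q.2⟩) (e w) : ℂ) := hSval u _ w
          have h4 : conj (a u w) = (inner ℂ (S₁ ⟨e w, hw⟩) (e u) : ℂ) := hS₁val w _ u
          rw [← h3]
          rw [show ((⟨e u, hu ▸ q.2⟩ : S.domain) : H) = e u from rfl]
          rw [← inner_conj_symm, ← hwz, ← h4]
          simp
        rw [← hq, h1, h2]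
      exact ⟨w, hw, hxew, by rw [← hwz]⟩
    constructor
    · intro x hx
      obtain ⟨w, hw, hxw, -⟩ := hdom x hx
      rw [hxw]; exact hw
    · intro x y hxy
      obtain ⟨w, hw, hxw, hval⟩ := hdom x x.2
      have hy : (y : H) = e w := by rw [← hxy]; exact hxw
      have : y = ⟨e w, hw⟩ := Subtype.ext hy
      rw [this]
      have : (⟨(x : H), x.2⟩ : S.adjoint.domain) = x := rfl
      rw [← this] at hval ⊢
      exact hval
  exact le_antisymm hle₂ hle₁

end Aux

/-- STATEMENT 12 (generalized Lax–Milgram, bijectivity): Let `V` be a Hilbert space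
densely and continuously embedded (via `e`) in a Hilbert space `H`, and let `a` be a
bounded sesquilinear form on `V` satisfying the generalized coercivity conditions
`|a(u,u)| + |a(u,Φ₁u)| ≥ α‖u‖²_V` and `|a(u,u)| + |a(Φ₂u,u)| ≥ α‖u‖²_V`, where
`Φ₁, Φ₂ ∈ L(V)` extend to bounded operators on `H` and `α > 0`.  Let `S` be the
operator on `H` associated to `a` (domain `D(S) = {u ∈ V : v ↦ a(u,v) is H-continuous}`,
`a(u,v) = ⟨Su, v⟩_H`) and let `S₁` be the operator associated in the same way to the
conjugate sesquilinear form `b(u,v) := conj(a(v,u))`.  Then `S* = S₁` and `S₁* = S`. -/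
theorem stmt14 {V H : Type*}
    [NormedAddCommGroup V] [InnerProductSpace ℂ V] [CompleteSpace V]
    [NormedAddCommGroup H] [InnerProductSpace ℂ H] [CompleteSpace H]
    (e : V →L[ℂ] H) (he_inj : Function.Injective e) (he_dense : DenseRange e)
    (a : V →ₛₗ[starRingEnd ℂ] V →ₗ[ℂ] ℂ)
    (habound : ∃ M : ℝ, ∀ u v : V, ‖a u v‖ ≤ M * ‖u‖ * ‖v‖)
    (Φ₁ Φ₂ : V →L[ℂ] V)
    (hΦ₁ext : ∃ Ψ₁ : H →L[ℂ] H, ∀ v : V, Ψ₁ (e v) = e (Φ₁ v))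
    (hΦ₂ext : ∃ Ψ₂ : H →L[ℂ] H, ∀ v : V, Ψ₂ (e v) = e (Φ₂ v))
    (α : ℝ) (hα : 0 < α)
    (hcoer1 : ∀ u : V, α * ‖u‖ ^ 2 ≤ ‖a u u‖ + ‖a u (Φ₁ u)‖)
    (hcoer2 : ∀ u : V, α * ‖u‖ ^ 2 ≤ ‖a u u‖ + ‖a (Φ₂ u) u‖)
    (S : H →ₗ.[ℂ] H)
    (hSdom : ∀ x : H, x ∈ S.domain ↔
      ∃ u : V, e u = x ∧ ∃ C : ℝ, ∀ v : V, ‖a u v‖ ≤ C * ‖e v‖)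
    (hSval : ∀ (u : V) (hx : e u ∈ S.domain), ∀ v : V,
      a u v = (inner ℂ (S ⟨e u, hx⟩) (e v) : ℂ))
    (S₁ : H →ₗ.[ℂ] H)
    (hS₁dom : ∀ x : H, x ∈ S₁.domain ↔
      ∃ u : V, e u = x ∧ ∃ C : ℝ, ∀ v : V, ‖(starRingEnd ℂ) (a v u)‖ ≤ C * ‖e v‖)
    (hS₁val : ∀ (u : V) (hx : e u ∈ S₁.domain), ∀ v : V,
      (starRingEnd ℂ) (a v u) = (inner ℂ (S₁ ⟨e u, hx⟩) (e v) : ℂ)) :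
    S.adjoint = S₁ ∧ S₁.adjoint = S := by
  have hbbound : ∃ M : ℝ, ∀ u v : V, ‖bform a u v‖ ≤ M * ‖u‖ * ‖v‖ := by
    obtain ⟨M, hM⟩ := habound
    exact ⟨M, fun u v => by
      simp only [bform_apply]
      rw [RCLike.norm_conj]
      calc ‖a v u‖ ≤ M * ‖v‖ * ‖u‖ := hM v u
        _ = M * ‖u‖ * ‖v‖ := by ring⟩
  have hbcoer1 : ∀ u : V, α * ‖u‖ ^ 2 ≤ ‖bform a u u‖ + ‖bform a u (Φ₂ u)‖ := fun u => by
    simp only [bform_apply, RCLike.norm_conj]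
    exact hcoer2 u
  have hbcoer2 : ∀ u : V, α * ‖u‖ ^ 2 ≤ ‖bform a u u‖ + ‖bform a (Φ₁ u) u‖ := fun u => by
    simp only [bform_apply, RCLike.norm_conj]
    exact hcoer1 u
  have hSdom' : ∀ x : H, x ∈ S₁.domain ↔
      ∃ u : V, e u = x ∧ ∃ C : ℝ, ∀ v : V, ‖bform a u v‖ ≤ C * ‖e v‖ := fun x => by
    simpa only [bform_apply] using hS₁dom x
  have hSval' : ∀ (u : V) (hx : e u ∈ S₁.domain), ∀ v : V,
      bform a u v = (inner ℂ (S₁ ⟨e u, hx⟩) (e v) : ℂ) := fun u hx v => by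
    simpa only [bform_apply] using hS₁val u hx v
  have hS₁dom' : ∀ x : H, x ∈ S.domain ↔
      ∃ u : V, e u = x ∧ ∃ C : ℝ, ∀ v : V, ‖(starRingEnd ℂ) (bform a v u)‖ ≤ C * ‖e v‖ :=
    fun x => by
      simpa only [bform_apply, Complex.conj_conj] using hSdom x
  have hS₁val' : ∀ (u : V) (hx : e u ∈ S.domain), ∀ v : V,
      (starRingEnd ℂ) (bform a v u) = (inner ℂ (S ⟨e u, hx⟩) (e v) : ℂ) := fun u hx v => by
    simpa only [bform_apply, Complex.conj_conj] using hSval u hx v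
  exact ⟨key e he_inj he_dense a habound Φ₁ Φ₂ α hα hcoer1 hcoer2 S hSdom hSval S₁ hS₁dom hS₁val,
    key e he_inj he_dense (bform a) hbbound Φ₂ Φ₁ α hα hbcoer1 hbcoer2 S₁ hSdom' hSval'
      S hS₁dom' hS₁val'⟩
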